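/- In Lehmann's example, every square-integrable unbiased estimator of zero is of the form U(x) = a·x for some a ∈ ℝ: if χ : {-1,0,1,2,...} → ℝ satisfies Σ_x χ(x) P_θ(X = x) = 0 for all θ ∈ (0,1), then there exists a ∈ ℝ with χ(x) = a·x for all x. -/

import Mathlib

open MeasureTheory

/-- The probability mass function in Lehmann's example: `X ∈ {-1,0,1,2,...}` with
`P_θ(X = -1) = θ` and `P_θ(X = k) = (1-θ)² θᵏ` for `k = 0,1,2,...`. -/
noncomputable def lehmannP (θ : ℝ) (x : ℤ) : ℝ :=
  if x = -1 then θ else if 0 ≤ x then (1 - θ) ^ 2 * θ ^ x.toNat else 0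

/-- `χ` is a square-integrable unbiased estimator of zero in Lehmann's example. -/
def IsUEZeroLehmann (χ : ℤ → ℝ) : Prop :=
  ∀ θ ∈ Set.Ioo (0 : ℝ) 1,
    Summable (fun x : ℤ => (χ x) ^ 2 * lehmannP θ x) ∧
    Summable (fun x : ℤ => χ x * lehmannP θ x) ∧
    ∑' x : ℤ, χ x * lehmannP θ x = 0

/-- If a power series sums to 0 for all θ ∈ (0,1/2), its constant coefficient is 0. -/
lemma lehmann_base (ψ : ℕ → ℝ)
    (h : ∀ θ ∈ Set.Ioo (0:ℝ) (1/2), Summable (fun n : ℕ => ψ n * θ ^ n) ∧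
      ∑' n : ℕ, ψ n * θ ^ n = 0) : ψ 0 = 0 := by
  -- get a bound |ψ n| ≤ C * 4^n
  have hq : (1/4 : ℝ) ∈ Set.Ioo (0:ℝ) (1/2) := by norm_num
  have hsum4 := (h _ hq).1
  have htend : Filter.Tendsto (fun n => |ψ n * (1/4:ℝ) ^ n|) Filter.atTop (nhds 0) := by
    simpa using (hsum4.tendsto_atTop_zero).abs
  obtain ⟨C, hC⟩ := htend.bddAbove_range
  have hC' : ∀ n, |ψ n| ≤ C * 4 ^ n := by
    intro n
    have h1 : |ψ n * (1/4:ℝ) ^ n| ≤ C := hC ⟨n, rfl⟩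
    have h2 : |ψ n| * (1/4:ℝ) ^ n ≤ C := by
      rwa [abs_mul, abs_of_nonneg (by positivity : (0:ℝ) ≤ (1/4:ℝ)^n)] at h1
    calc |ψ n| = |ψ n| * (1/4:ℝ)^n * 4^n := by
          rw [mul_assoc, ← mul_pow]; norm_num
      _ ≤ C * 4 ^ n := mul_le_mul_of_nonneg_right h2 (by positivity)
  have hC0 : 0 ≤ C := le_trans (abs_nonneg _) (hC ⟨0, rfl⟩)
  -- key bound: for θ ∈ (0, 1/8), |ψ 0| ≤ 8*C*θ
  have hbound : ∀ θ ∈ Set.Ioo (0:ℝ) (1/8), |ψ 0| ≤ 8 * C * θ := by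
    intro θ hθ
    obtain ⟨hθ0, hθ8⟩ := hθ
    have hθ1 : θ ∈ Set.Ioo (0:ℝ) (1/2) := ⟨hθ0, by linarith⟩
    obtain ⟨hs, ht⟩ := h θ hθ1
    have hsplit := Summable.tsum_eq_zero_add hs
    rw [ht] at hsplit
    have hψ0 : ψ 0 = -∑' n : ℕ, ψ (n+1) * θ ^ (n+1) := by
      have : ψ 0 * θ ^ 0 = ψ 0 := by simp
      rw [this] at hsplit
      linarith [hsplit]
    have h4θ : |4 * θ| < 1 := by rw [abs_of_pos (by linarith)]; linarith
    have hgeo : HasSum (fun n : ℕ => (4 * C * θ) * (4 * θ) ^ n)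
        ((4 * C * θ) * (1 - 4 * θ)⁻¹) :=
      (hasSum_geometric_of_abs_lt_one h4θ).mul_left _
    have hnorm : ∀ n : ℕ, ‖ψ (n+1) * θ ^ (n+1)‖ ≤ (4 * C * θ) * (4 * θ) ^ n := by
      intro n
      rw [Real.norm_eq_abs, abs_mul, abs_of_nonneg (by positivity : (0:ℝ) ≤ θ ^ (n+1))]
      calc |ψ (n+1)| * θ ^ (n+1) ≤ (C * 4 ^ (n+1)) * θ ^ (n+1) :=
            mul_le_mul_of_nonneg_right (hC' (n+1)) (by positivity)
        _ = (4 * C * θ) * (4 * θ) ^ n := by rw [mul_pow]; ring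
    have habs : ‖∑' n : ℕ, ψ (n+1) * θ ^ (n+1)‖ ≤ (4 * C * θ) * (1 - 4 * θ)⁻¹ :=
      tsum_of_norm_bounded hgeo hnorm
    rw [hψ0, abs_neg, ← Real.norm_eq_abs]
    calc ‖∑' n : ℕ, ψ (n+1) * θ ^ (n+1)‖ ≤ (4 * C * θ) * (1 - 4 * θ)⁻¹ := habs
      _ ≤ 8 * C * θ := by
          rw [mul_inv_le_iff₀ (by linarith : (0:ℝ) < 1 - 4 * θ)]
          nlinarith [mul_nonneg (mul_nonneg hC0 hθ0.le) (by linarith : (0:ℝ) ≤ 1 - 8 * θ)]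
  -- conclude by letting θ → 0⁺
  have hev : ∀ᶠ θ in nhdsWithin (0:ℝ) (Set.Ioi 0), |ψ 0| ≤ 8 * C * θ := by
    filter_upwards [Ioo_mem_nhdsGT_of_mem (by norm_num : (0:ℝ) ∈ Set.Ico 0 (1/8))] with θ hθ
    exact hbound θ hθ
  have hlim : Filter.Tendsto (fun θ : ℝ => 8 * C * θ) (nhdsWithin 0 (Set.Ioi 0)) (nhds 0) := by
    have : Filter.Tendsto (fun θ : ℝ => 8 * C * θ) (nhds 0) (nhds (8 * C * 0)) :=
      (continuous_const.mul continuous_id).tendsto 0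
    simpa using this.mono_left nhdsWithin_le_nhds
  have : |ψ 0| ≤ 0 := ge_of_tendsto hlim hev
  exact abs_eq_zero.mp (le_antisymm this (abs_nonneg _))

/-- If a power series sums to 0 for all θ ∈ (0,1/2), all coefficients vanish. -/
lemma lehmann_coeffs (n : ℕ) : ∀ ψ : ℕ → ℝ,
    (∀ θ ∈ Set.Ioo (0:ℝ) (1/2), Summable (fun n : ℕ => ψ n * θ ^ n) ∧
      ∑' n : ℕ, ψ n * θ ^ n = 0) → ψ n = 0 := by
  induction n with
  | zero => exact fun ψ h => lehmann_base ψ h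
  | succ n ih =>
    intro ψ h
    have h0 : ψ 0 = 0 := lehmann_base ψ h
    refine ih (fun k => ψ (k+1)) ?_
    intro θ hθ
    have hθ0 : 0 < θ := hθ.1
    have hθne : θ ≠ 0 := ne_of_gt hθ0
    obtain ⟨hs, ht⟩ := h θ hθ
    have hs' : Summable (fun k : ℕ => ψ (k+1) * θ ^ (k+1)) :=
      (summable_nat_add_iff 1).2 hs
    have key : (fun k : ℕ => ψ (k+1) * θ ^ k)
        = fun k : ℕ => (ψ (k+1) * θ ^ (k+1)) * θ⁻¹ := by
      funext k
      rw [pow_succ]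
      field_simp
    have hts : ∑' k : ℕ, ψ (k+1) * θ ^ (k+1) = 0 := by
      have hsplit := Summable.tsum_eq_zero_add hs
      rw [ht, h0] at hsplit
      simpa using hsplit.symm
    constructor
    · rw [key]; exact hs'.mul_right _
    · rw [key, tsum_mul_right, hts, zero_mul]

theorem stmt11 (χ : ℤ → ℝ)
    (hsum : ∀ θ ∈ Set.Ioo (0 : ℝ) 1, Summable (fun x : ℤ => χ x * lehmannP θ x))
    (hzero : ∀ θ ∈ Set.Ioo (0 : ℝ) 1, ∑' x : ℤ, χ x * lehmannP θ x = 0) :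
    ∃ a : ℝ, ∀ x : ℤ, -1 ≤ x → χ x = a * x := by
  set c : ℝ := χ (-1) with hc
  -- for each θ ∈ (0,1): summability of χ n θ^n and the key identity
  have key : ∀ θ ∈ Set.Ioo (0:ℝ) 1, Summable (fun n : ℕ => χ n * θ ^ n) ∧
      c * θ + (1-θ)^2 * ∑' n : ℕ, χ n * θ ^ n = 0 := by
    intro θ hθ
    obtain ⟨hθ0, hθ1⟩ := hθ
    have h2ne : ((1:ℝ)-θ)^2 ≠ 0 := pow_ne_zero _ (by linarith)
    set f : ℤ → ℝ := fun x => χ x * lehmannP θ x with hf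
    have hi : Function.Injective (fun n : ℕ => (n:ℤ) - 1) := by
      intro a b hab; simpa using hab
    have hfzero : ∀ x : ℤ, x ∉ Set.range (fun n : ℕ => (n:ℤ) - 1) → f x = 0 := by
      intro x hx
      have hlt : x < -1 := by
        by_contra hge
        push_neg at hge
        exact hx ⟨(x+1).toNat, by show ((x+1).toNat : ℤ) - 1 = x; omega⟩
      have : lehmannP θ x = 0 := by
        unfold lehmannP
        rw [if_neg (by omega), if_neg (by omega)]
      simp [hf, this]
    have hsupp : Function.support f ⊆ Set.range (fun n : ℕ => (n:ℤ) - 1) := by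
      intro x hx
      by_contra hxr
      exact hx (hfzero x hxr)
    have hsummZ := hsum θ ⟨hθ0, hθ1⟩
    have hsummN : Summable (f ∘ fun n : ℕ => (n:ℤ) - 1) :=
      (hi.summable_iff hfzero).2 hsummZ
    have htsumN : ∑' n : ℕ, f ((n:ℤ) - 1) = 0 := by
      rw [hi.tsum_eq hsupp]
      exact hzero θ ⟨hθ0, hθ1⟩
    have hg0 : f ((0:ℤ) - 1) = c * θ := by
      simp [hf, lehmannP, hc]
    have hgsucc : ∀ n : ℕ, f (((n:ℕ)+1:ℤ) - 1) = (1-θ)^2 * (χ n * θ ^ n) := by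
      intro n
      have h1 : (((n:ℕ)+1:ℤ) - 1) = (n:ℤ) := by ring
      have h2 : lehmannP θ (n:ℤ) = (1-θ)^2 * θ ^ n := by
        unfold lehmannP
        rw [if_neg (by omega), if_pos (by omega), Int.toNat_natCast]
      rw [h1, hf]; simp only [h2]; ring
    have hsplit := Summable.tsum_eq_zero_add hsummN
    simp only [Function.comp_def] at hsplit
    rw [htsumN] at hsplit
    have hsummtail : Summable (fun n : ℕ => (1-θ)^2 * (χ n * θ ^ n)) := by
      have := (summable_nat_add_iff 1).2 hsummN
      refine this.congr fun n => ?_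
      have : (((n:ℕ)+1:ℤ)) - 1 = (n:ℤ) := by ring
      simpa using (hgsucc n)
    have hsummχ : Summable (fun n : ℕ => χ n * θ ^ n) :=
      ((summable_mul_left_iff h2ne).1 hsummtail)
    refine ⟨hsummχ, ?_⟩
    have htail : ∑' n : ℕ, f ((((n:ℕ)+1:ℕ):ℤ) - 1)
        = (1-θ)^2 * ∑' n : ℕ, χ n * θ ^ n := by
      rw [← tsum_mul_left]
      congr 1
      funext n
      push_cast
      simpa using hgsucc n
    rw [htail] at hsplit
    have hg0' : f (((0:ℕ):ℤ) - 1) = c * θ := by simpa using hg0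
    rw [hg0'] at hsplit
    linarith [hsplit]
  -- apply coefficient extraction to ψ n = χ n + c * n
  have hψ : ∀ n : ℕ, χ (n:ℤ) + c * n = 0 := by
    intro n
    refine lehmann_coeffs n (fun k => χ (k:ℤ) + c * k) ?_
    intro θ hθ
    obtain ⟨hθ0, hθh⟩ := hθ
    have hθ1 : θ ∈ Set.Ioo (0:ℝ) 1 := ⟨hθ0, by linarith⟩
    obtain ⟨hsχ, hid⟩ := key θ hθ1
    have hnθ : ‖θ‖ < 1 := by rw [Real.norm_eq_abs, abs_of_pos hθ0]; linarith
    have hBsum : Summable (fun n : ℕ => (n:ℝ) * θ ^ n) :=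
      (hasSum_coe_mul_geometric_of_norm_lt_one hnθ).summable
    have hB : ∑' n : ℕ, (n:ℝ) * θ ^ n = θ / (1-θ)^2 :=
      tsum_coe_mul_geometric_of_norm_lt_one hnθ
    have hrw : (fun n : ℕ => (χ (n:ℤ) + c * n) * θ ^ n)
        = fun n : ℕ => χ (n:ℤ) * θ ^ n + c * ((n:ℝ) * θ ^ n) := by
      funext n; ring
    constructor
    · rw [hrw]; exact hsχ.add (hBsum.mul_left c)
    · rw [hrw, Summable.tsum_add hsχ (hBsum.mul_left c), tsum_mul_left, hB]
      have h1θ : ((1:ℝ)-θ)^2 ≠ 0 := pow_ne_zero _ (by linarith)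
      have hA : ∑' n : ℕ, χ (n:ℤ) * θ ^ n = -(c * θ) / (1-θ)^2 := by
        rw [eq_div_iff h1θ]
        linarith [hid]
      rw [hA]
      field_simp
      ring
  refine ⟨-c, fun x hx => ?_⟩
  rcases eq_or_lt_of_le hx with h | h
  · rw [← h]; simp [hc]
  · have hx0 : 0 ≤ x := by omega
    have := hψ x.toNat
    rw [Int.toNat_of_nonneg hx0] at this
    have hcast : ((x.toNat : ℝ)) = (x : ℝ) := by
      exact_mod_cast Int.toNat_of_nonneg hx0
    rw [hcast] at this
    linarith [this]
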